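/- For a maximally non-commutative factor system ω of a finite abelian group G, there is a unique irreducible projective unitary representation with factor system ω, up to unitary equivalence. -/

import Mathlib

open Matrix

set_option maxHeartbeats 1000000

/-- For a maximally non-commutative factor system `ω` of a finite abelian group `G`,
the irreducible projective unitary representation with factor system `ω` is unique
up to unitary equivalence. -/
theorem unique_irreducible_of_maximally_non_commutative
    {G : Type*} [CommGroup G] [Fintype G] {n m : ℕ} (hn : 0 < n) (hm : 0 < m)
    (ω : G → G → ℂ)
    (hcocycle : ∀ g h k, ω g h * ω (g * h) k = ω h k * ω g (h * k))
    (hω : ∀ g h, ‖ω g h‖ = 1)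
    (hmnc : ∀ g, (∀ h, ω g h = ω h g) → g = 1)
    (V : G → Matrix (Fin n) (Fin n) ℂ) (V' : G → Matrix (Fin m) (Fin m) ℂ)
    (hVunit : ∀ g, V g ∈ Matrix.unitaryGroup (Fin n) ℂ)
    (hV'unit : ∀ g, V' g ∈ Matrix.unitaryGroup (Fin m) ℂ)
    (hVproj : ∀ g h, V g * V h = ω g h • V (g * h))
    (hV'proj : ∀ g h, V' g * V' h = ω g h • V' (g * h))
    (hVirr : ∀ p : Submodule ℂ (Fin n → ℂ),
      (∀ g, p.map (Matrix.toLin' (V g)) ≤ p) → p = ⊥ ∨ p = ⊤)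
    (hV'irr : ∀ p : Submodule ℂ (Fin m → ℂ),
      (∀ g, p.map (Matrix.toLin' (V' g)) ≤ p) → p = ⊥ ∨ p = ⊤) :
    ∃ U : Matrix (Fin m) (Fin n) ℂ,
      Uᴴ * U = 1 ∧ U * Uᴴ = 1 ∧ ∀ g, V' g = U * V g * Uᴴ := by
  classical
  have hωne : ∀ g h, ω g h ≠ 0 := fun g h h0 => by simpa [h0] using hω g h
  have hωconj : ∀ g h, ω g h * (starRingEnd ℂ) (ω g h) = 1 := by
    intro g h
    rw [Complex.mul_conj]
    norm_cast
    rw [← Complex.sq_norm, hω g h, one_pow]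
  have hVu1 : ∀ g, (V g)ᴴ * V g = 1 := by
    intro g
    have := (Unitary.mem_iff.mp (hVunit g)).1
    simpa [Matrix.star_eq_conjTranspose] using this
  have hVu2 : ∀ g, V g * (V g)ᴴ = 1 := by
    intro g
    have := (Unitary.mem_iff.mp (hVunit g)).2
    simpa [Matrix.star_eq_conjTranspose] using this
  have hV'u1 : ∀ g, (V' g)ᴴ * V' g = 1 := by
    intro g
    have := (Unitary.mem_iff.mp (hV'unit g)).1
    simpa [Matrix.star_eq_conjTranspose] using this
  have hV'u2 : ∀ g, V' g * (V' g)ᴴ = 1 := by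
    intro g
    have := (Unitary.mem_iff.mp (hV'unit g)).2
    simpa [Matrix.star_eq_conjTranspose] using this
  -- V 1 and V' 1 are scalars
  have hV1 : V 1 = ω 1 1 • (1 : Matrix (Fin n) (Fin n) ℂ) := by
    have h11 := hVproj 1 1
    have := congrArg (· * (V 1)ᴴ) h11
    simpa [mul_one, Matrix.mul_assoc, hVu2 1, Matrix.smul_mul] using this
  have hV'1 : V' 1 = ω 1 1 • (1 : Matrix (Fin m) (Fin m) ℂ) := by
    have h11 := hV'proj 1 1
    have := congrArg (· * (V' 1)ᴴ) h11
    simpa [mul_one, Matrix.mul_assoc, hV'u2 1, Matrix.smul_mul] using this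
  -- trace of V g vanishes for g ≠ 1
  have htr0 : ∀ g : G, g ≠ 1 → (V g).trace = 0 := by
    intro g hg
    obtain ⟨h, hne⟩ : ∃ h, ω g h ≠ ω h g := by
      by_contra hc
      push_neg at hc
      exact hg (hmnc g hc)
    have key : V h * V g * (V h)ᴴ = (ω h g * (ω g h)⁻¹) • V g := by
      have h1 : V h * V g = ω h g • V (g * h) := by
        rw [hVproj h g, mul_comm h g]
      have h2 : V (g * h) = (ω g h)⁻¹ • (V g * V h) := by
        rw [hVproj g h, smul_smul, inv_mul_cancel₀ (hωne g h), one_smul]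
      rw [h1, h2, Matrix.smul_mul, Matrix.smul_mul, smul_smul, Matrix.mul_assoc,
        hVu2 h, Matrix.mul_one]
    have htr1 : (V h * V g * (V h)ᴴ).trace = (V g).trace := by
      rw [Matrix.trace_mul_comm, ← Matrix.mul_assoc, hVu1 h, Matrix.one_mul]
    rw [key, Matrix.trace_smul, smul_eq_mul] at htr1
    have : (ω h g * (ω g h)⁻¹ - 1) * (V g).trace = 0 := by ring_nf; linear_combination htr1
    rcases mul_eq_zero.mp this with h0 | h0
    · exfalso
      apply hne
      have h1 : ω h g * (ω g h)⁻¹ = 1 := by linear_combination h0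
      field_simp [hωne g h] at h1
      exact h1.symm
    · exact h0
  -- the averaging operator
  set T : Matrix (Fin m) (Fin n) ℂ → Matrix (Fin m) (Fin n) ℂ :=
    fun A => ∑ g : G, V' g * A * (V g)ᴴ with hT
  -- each T A intertwines V and V'
  have hTint : ∀ (A : Matrix (Fin m) (Fin n) ℂ) (h : G), V' h * T A = T A * V h := by
    intro A h
    have step : ∀ g : G, V' h * (V' g * A * (V g)ᴴ) * (V h)ᴴ
        = V' (h * g) * A * (V (h * g))ᴴ := by
      intro g
      have e1 : V' h * (V' g * A * (V g)ᴴ) * (V h)ᴴ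
          = (V' h * V' g) * A * (V h * V g)ᴴ := by
        rw [Matrix.conjTranspose_mul]
        simp only [Matrix.mul_assoc]
      have hc1 : ω h g * star (ω h g) = 1 := hωconj h g
      have hc2 : star (ω h g) * ω h g = 1 := by rw [mul_comm]; exact hc1
      rw [e1, hV'proj h g, hVproj h g, Matrix.conjTranspose_smul]
      simp only [Matrix.smul_mul, Matrix.mul_smul, smul_smul, hc1, hc2, one_smul]
    have hfix : V' h * T A * (V h)ᴴ = T A := by
      calc V' h * T A * (V h)ᴴ
          = ∑ g : G, V' h * (V' g * A * (V g)ᴴ) * (V h)ᴴ := by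
            simp only [hT]
            rw [Matrix.mul_sum, Matrix.sum_mul]
        _ = ∑ g : G, V' (h * g) * A * (V (h * g))ᴴ :=
            Finset.sum_congr rfl (fun g _ => step g)
        _ = T A := by
            simp only [hT]
            exact Equiv.sum_comp (Equiv.mulLeft h) (fun g => V' g * A * (V g)ᴴ)
    calc V' h * T A = V' h * T A * ((V h)ᴴ * V h) := by rw [hVu1 h, Matrix.mul_one]
    _ = (V' h * T A * (V h)ᴴ) * V h := by simp only [Matrix.mul_assoc]
    _ = T A * V h := by rw [hfix]
  -- some T A is nonzero
  have hsum : ∑ g : G, (V' g).trace * (starRingEnd ℂ) ((V g).trace) = ((m : ℂ) * n) := by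
    rw [Finset.sum_eq_single (1 : G)]
    · have e1 : (V' 1).trace = ω 1 1 * m := by
        rw [hV'1, Matrix.trace_smul, Matrix.trace_one]
        simp
      have e2 : (V 1).trace = ω 1 1 * n := by
        rw [hV1, Matrix.trace_smul, Matrix.trace_one]
        simp
      rw [e1, e2, _root_.map_mul, Complex.conj_natCast]
      calc ω 1 1 * (m : ℂ) * ((starRingEnd ℂ) (ω 1 1) * (n : ℂ))
          = (ω 1 1 * (starRingEnd ℂ) (ω 1 1)) * ((m : ℂ) * n) := by ring
        _ = (m : ℂ) * n := by rw [hωconj 1 1]; ring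
    · intro g _ hg
      rw [htr0 g hg]
      simp
    · intro hmem
      exact absurd (Finset.mem_univ 1) hmem
  have hTexists : ∃ A : Matrix (Fin m) (Fin n) ℂ, T A ≠ 0 := by
    by_contra hc
    push_neg at hc
    have hentry : ∀ (j : Fin m) (j' : Fin n),
        ∑ g : G, V' g j j * (starRingEnd ℂ) (V g j' j') = 0 := by
      intro j j'
      have h0 := hc (Matrix.single j j' 1)
      have h1 := Matrix.ext_iff.mpr h0 j j'
      simp only [hT] at h1
      simp only [Matrix.sum_apply, Matrix.zero_apply] at h1
      rw [← h1]
      refine Finset.sum_congr rfl (fun g _ => ?_)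
      simp [Matrix.mul_apply, Matrix.single, Matrix.conjTranspose_apply,
        Finset.sum_ite_eq, ite_and]
    have hzero : ∑ g : G, (V' g).trace * (starRingEnd ℂ) ((V g).trace) = 0 := by
      have expand : ∀ g : G, (V' g).trace * (starRingEnd ℂ) ((V g).trace)
          = ∑ j : Fin m, ∑ j' : Fin n, V' g j j * (starRingEnd ℂ) (V g j' j') := by
        intro g
        rw [Matrix.trace, Matrix.trace, map_sum, Finset.sum_mul_sum]
        simp [Matrix.diag]
      calc ∑ g : G, (V' g).trace * (starRingEnd ℂ) ((V g).trace)
          = ∑ g : G, ∑ j : Fin m, ∑ j' : Fin n, V' g j j * (starRingEnd ℂ) (V g j' j') :=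
            Finset.sum_congr rfl (fun g _ => expand g)
        _ = ∑ j : Fin m, ∑ g : G, ∑ j' : Fin n, V' g j j * (starRingEnd ℂ) (V g j' j') :=
            Finset.sum_comm
        _ = ∑ j : Fin m, ∑ j' : Fin n, ∑ g : G, V' g j j * (starRingEnd ℂ) (V g j' j') :=
            Finset.sum_congr rfl (fun j _ => Finset.sum_comm)
        _ = 0 := by simp [hentry]
    rw [hsum] at hzero
    have hmn : (m : ℂ) ≠ 0 ∧ (n : ℂ) ≠ 0 := by
      constructor <;> · simp only [ne_eq, Nat.cast_eq_zero]; omega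
    exact hmn.1 (by
      rcases mul_eq_zero.mp hzero with h | h
      · exact h
      · exact absurd h hmn.2)
  obtain ⟨A, hA⟩ := hTexists
  set Tm : Matrix (Fin m) (Fin n) ℂ := T A with hTmdef
  have hint : ∀ g, V' g * Tm = Tm * V g := fun g => hTint A g
  -- kernel of Tm is trivial
  have hkerinv : ∀ g, (LinearMap.ker (Matrix.toLin' Tm)).map (Matrix.toLin' (V g))
      ≤ LinearMap.ker (Matrix.toLin' Tm) := by
    intro g y hy
    rw [Submodule.mem_map] at hy
    obtain ⟨x, hx, rfl⟩ := hy
    rw [LinearMap.mem_ker] at hx ⊢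
    have hcg := congrArg Matrix.toLin' (hint g)
    rw [Matrix.toLin'_mul, Matrix.toLin'_mul] at hcg
    have h2 := LinearMap.congr_fun hcg x
    simp only [LinearMap.comp_apply] at h2
    rw [← h2, hx, map_zero]
  have hker : LinearMap.ker (Matrix.toLin' Tm) = ⊥ := by
    rcases hVirr _ hkerinv with h | h
    · exact h
    · exfalso
      apply hA
      have h0 : Matrix.toLin' Tm = 0 := LinearMap.ker_eq_top.mp h
      exact Matrix.toLin'.injective (by rw [h0, map_zero])
  -- range of Tm is everything
  have hrangeinv : ∀ g, (LinearMap.range (Matrix.toLin' Tm)).map (Matrix.toLin' (V' g))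
      ≤ LinearMap.range (Matrix.toLin' Tm) := by
    intro g y hy
    rw [Submodule.mem_map] at hy
    obtain ⟨x, ⟨z, rfl⟩, rfl⟩ := hy
    refine ⟨Matrix.toLin' (V g) z, ?_⟩
    have hcg := congrArg Matrix.toLin' (hint g)
    rw [Matrix.toLin'_mul, Matrix.toLin'_mul] at hcg
    have h2 := LinearMap.congr_fun hcg z
    simp only [LinearMap.comp_apply] at h2
    exact h2.symm
  have hrange : LinearMap.range (Matrix.toLin' Tm) = ⊤ := by
    rcases hV'irr _ hrangeinv with h | h
    · exfalso
      apply hA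
      have h0 : Matrix.toLin' Tm = 0 := LinearMap.range_eq_bot.mp h
      exact Matrix.toLin'.injective (by rw [h0, map_zero])
    · exact h
  -- Tmᴴ * Tm commutes with all V g
  have hconj : ∀ g, (V g)ᴴ * Tmᴴ = Tmᴴ * (V' g)ᴴ := by
    intro g
    have hcg := congrArg Matrix.conjTranspose (hint g)
    rw [Matrix.conjTranspose_mul, Matrix.conjTranspose_mul] at hcg
    exact hcg.symm
  have hTmV' : ∀ g, Tmᴴ * V' g = V g * Tmᴴ := by
    intro g
    calc Tmᴴ * V' g = (V g * (V g)ᴴ) * (Tmᴴ * V' g) := by rw [hVu2 g, Matrix.one_mul]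
      _ = V g * (((V g)ᴴ * Tmᴴ) * V' g) := by simp only [Matrix.mul_assoc]
      _ = V g * ((Tmᴴ * (V' g)ᴴ) * V' g) := by rw [hconj g]
      _ = V g * (Tmᴴ * ((V' g)ᴴ * V' g)) := by simp only [Matrix.mul_assoc]
      _ = V g * Tmᴴ := by rw [hV'u1 g, Matrix.mul_one]
  have hScomm : ∀ g, V g * (Tmᴴ * Tm) = (Tmᴴ * Tm) * V g := by
    intro g
    calc V g * (Tmᴴ * Tm) = (V g * Tmᴴ) * Tm := by rw [Matrix.mul_assoc]
      _ = (Tmᴴ * V' g) * Tm := by rw [hTmV' g]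
      _ = Tmᴴ * (V' g * Tm) := by rw [Matrix.mul_assoc]
      _ = Tmᴴ * (Tm * V g) := by rw [hint g]
      _ = (Tmᴴ * Tm) * V g := by rw [Matrix.mul_assoc]
  -- Tmᴴ * Tm is a scalar, by Schur
  haveI : Nonempty (Fin n) := ⟨⟨0, hn⟩⟩
  obtain ⟨μ, hμ⟩ := Module.End.exists_eigenvalue (Matrix.toLin' (Tmᴴ * Tm))
  obtain ⟨x, hx⟩ := hμ.exists_hasEigenvector
  set S2 : Matrix (Fin n) (Fin n) ℂ := Tmᴴ * Tm - μ • 1 with hS2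
  have hS2comm : ∀ g, V g * S2 = S2 * V g := by
    intro g
    rw [hS2, Matrix.mul_sub, Matrix.sub_mul, hScomm g]
    congr 1
    rw [Matrix.mul_smul, Matrix.smul_mul, Matrix.mul_one, Matrix.one_mul]
  have hxker : x ∈ LinearMap.ker (Matrix.toLin' S2) := by
    rw [LinearMap.mem_ker]
    have e0 : Matrix.toLin' S2 x
        = Matrix.toLin' (Tmᴴ * Tm) x - Matrix.toLin' (μ • (1 : Matrix (Fin n) (Fin n) ℂ)) x := by
      rw [hS2, map_sub, LinearMap.sub_apply]
    have e : Matrix.toLin' (μ • (1 : Matrix (Fin n) (Fin n) ℂ)) x = μ • x := by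
      rw [_root_.map_smul, Matrix.toLin'_one]
      rfl
    rw [e0, e, hx.apply_eq_smul, sub_self]
  have hS2inv : ∀ g, (LinearMap.ker (Matrix.toLin' S2)).map (Matrix.toLin' (V g))
      ≤ LinearMap.ker (Matrix.toLin' S2) := by
    intro g y hy
    rw [Submodule.mem_map] at hy
    obtain ⟨z, hz, rfl⟩ := hy
    rw [LinearMap.mem_ker] at hz ⊢
    have hcg := congrArg Matrix.toLin' (hS2comm g)
    rw [Matrix.toLin'_mul, Matrix.toLin'_mul] at hcg
    have h2 := LinearMap.congr_fun hcg z
    simp only [LinearMap.comp_apply] at h2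
    rw [← h2, hz, map_zero]
  have hSscalar : Tmᴴ * Tm = μ • 1 := by
    rcases hVirr _ hS2inv with h | h
    · exfalso
      rw [h] at hxker
      exact hx.2 (by simpa using hxker)
    · have h0 : Matrix.toLin' S2 = 0 := LinearMap.ker_eq_top.mp h
      have h1 : S2 = 0 := Matrix.toLin'.injective (by rw [h0, map_zero])
      rw [hS2] at h1
      exact sub_eq_zero.mp h1
  -- μ is a positive real number
  set i0 : Fin n := ⟨0, hn⟩ with hi0
  have hcol : ∃ k, Tm k i0 ≠ 0 := by
    by_contra hcc
    push_neg at hcc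
    have hx0 : Matrix.toLin' Tm (Pi.single i0 1) = 0 := by
      ext k
      simp [Matrix.toLin'_apply, Matrix.mulVec, dotProduct, Pi.single_apply, hcc]
    have hinj : Function.Injective (Matrix.toLin' Tm) := LinearMap.ker_eq_bot.mp hker
    have h0 : (Pi.single i0 (1:ℂ) : Fin n → ℂ) = 0 := by
      apply hinj
      rw [hx0, map_zero]
    have := congrFun h0 i0
    simp at this
  set r : ℝ := ∑ k, Complex.normSq (Tm k i0) with hr
  have hrpos : 0 < r := by
    obtain ⟨k, hk⟩ := hcol
    exact Finset.sum_pos' (fun k _ => Complex.normSq_nonneg _)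
      ⟨k, Finset.mem_univ k, Complex.normSq_pos.mpr hk⟩
  have hμr : μ = ((r : ℝ) : ℂ) := by
    have hdiag := Matrix.ext_iff.mpr hSscalar i0 i0
    have hL : (Tmᴴ * Tm) i0 i0 = ((r : ℝ) : ℂ) := by
      rw [Matrix.mul_apply, hr]
      push_cast
      refine Finset.sum_congr rfl (fun k _ => ?_)
      rw [Matrix.conjTranspose_apply, Complex.normSq_eq_conj_mul_self]
      rfl
    have hR : (μ • (1 : Matrix (Fin n) (Fin n) ℂ)) i0 i0 = μ := by
      simp [Matrix.smul_apply, Matrix.one_apply_eq]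
    rw [hL, hR] at hdiag
    exact hdiag.symm
  set c : ℝ := Real.sqrt r with hcdef
  have hcpos : 0 < c := Real.sqrt_pos.mpr hrpos
  have hcne : ((c : ℝ) : ℂ) ≠ 0 := Complex.ofReal_ne_zero.mpr hcpos.ne'
  -- the unitary
  set U : Matrix (Fin m) (Fin n) ℂ := (((c:ℝ):ℂ)⁻¹) • Tm with hUdef
  have h1 : star (((c:ℝ):ℂ)⁻¹) = ((c:ℝ):ℂ)⁻¹ := by
    rw [star_inv₀]
    norm_num [Complex.conj_ofReal]
  have hUU : Uᴴ * U = 1 := by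
    rw [hUdef, Matrix.conjTranspose_smul, Matrix.smul_mul, Matrix.mul_smul, smul_smul,
      hSscalar, smul_smul, h1, hμr]
    have h2 : (((c:ℝ):ℂ))⁻¹ * (((c:ℝ):ℂ))⁻¹ * ((r:ℝ):ℂ) = 1 := by
      have hcc : ((c:ℝ) * c) = r := Real.mul_self_sqrt hrpos.le
      rw [← hcc]
      push_cast
      field_simp
    rw [h2, one_smul]
  have hsurj : Function.Surjective (Matrix.toLin' U) := by
    have hs : Function.Surjective (Matrix.toLin' Tm) := LinearMap.range_eq_top.mp hrange
    intro y
    obtain ⟨x, hx'⟩ := hs y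
    refine ⟨((c:ℝ):ℂ) • x, ?_⟩
    rw [hUdef, _root_.map_smul]
    simp only [LinearMap.smul_apply, _root_.map_smul, smul_smul]
    rw [mul_inv_cancel₀ hcne, one_smul, hx']
  have hUU2 : U * Uᴴ = 1 := by
    apply Matrix.toLin'.injective
    apply LinearMap.ext
    intro y
    obtain ⟨x, rfl⟩ := hsurj y
    rw [Matrix.toLin'_mul, Matrix.toLin'_one]
    simp only [LinearMap.comp_apply, LinearMap.id_apply]
    have e : Matrix.toLin' Uᴴ (Matrix.toLin' U x) = Matrix.toLin' (Uᴴ * U) x := by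
      rw [Matrix.toLin'_mul]
      simp only [LinearMap.comp_apply]
    rw [e, hUU, Matrix.toLin'_one]
    simp only [LinearMap.id_apply]
  refine ⟨U, hUU, hUU2, ?_⟩
  intro g
  have hint' : V' g * U = U * V g := by
    rw [hUdef, Matrix.mul_smul, Matrix.smul_mul, hint g]
  calc V' g = V' g * (U * Uᴴ) := by rw [hUU2, Matrix.mul_one]
    _ = (V' g * U) * Uᴴ := by rw [Matrix.mul_assoc]
    _ = U * V g * Uᴴ := by rw [hint']
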